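/- arXiv:2406.08569 — 4 statements merged into one kernel-verified Lean document; each statement's English description precedes it below -/
import Mathlib

section
/- Let Δ > 0, μ > 0, and set σ = Δ/μ. Then for all a, b ∈ ℝ with |a − b| ≤ Δ, all ε ≥ 0, and every measurable set S ⊆ ℝ, the Gaussian measures with variance σ² satisfy N(a, σ²)(S) ≤ e^ε · N(b, σ²)(S) + δ_μ(ε), where δ_μ(ε) = Φ(−ε/μ + μ/2) − e^ε · Φ(−ε/μ − μ/2). (The Gaussian mechanism with noise scale σ = Δ/μ is μ-GDP.) -/
open MeasureTheory ProbabilityTheory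

/-- The cumulative distribution function Φ of the standard normal distribution on ℝ. -/
noncomputable def stdNormalCDF (x : ℝ) : ℝ :=
  ((gaussianReal 0 1) (Set.Iic x)).toReal

/-- The Gaussian privacy curve δ_μ(ε) = Φ(−ε/μ + μ/2) − e^ε · Φ(−ε/μ − μ/2). -/
noncomputable def gdpCurve (μ ε : ℝ) : ℝ :=
  stdNormalCDF (-ε / μ + μ / 2) - Real.exp ε * stdNormalCDF (-ε / μ - μ / 2)

open Real Set Filter
open scoped ENNReal NNReal

lemma stdNormalCDF_nonneg (x : ℝ) : 0 ≤ stdNormalCDF x := ENNReal.toReal_nonneg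

lemma gaussian_iic (m x : ℝ) :
    gaussianReal m 1 (Set.Iic x) = ENNReal.ofReal (stdNormalCDF (x - m)) := by
  have h := gaussianReal_map_add_const (μ := 0) (v := 1) m
  rw [zero_add] at h
  rw [← h, Measure.map_apply (measurable_add_const m) measurableSet_Iic]
  have : (· + m) ⁻¹' Set.Iic x = Set.Iic (x - m) := by
    ext y; simp [Set.mem_Iic, le_sub_iff_add_le]
  rw [this, stdNormalCDF, ENNReal.ofReal_toReal (measure_ne_top _ _)]

lemma stdNormalCDF_eq_integral (x : ℝ) :
    stdNormalCDF x = ∫ t in Set.Iic x, gaussianPDFReal 0 1 t := by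
  rw [stdNormalCDF, gaussianReal_apply_eq_integral 0 one_ne_zero,
    ENNReal.toReal_ofReal]
  exact setIntegral_nonneg measurableSet_Iic fun t _ => gaussianPDFReal_nonneg _ _ _

lemma continuous_gaussianPDFReal (m : ℝ) (v : NNReal) : Continuous (gaussianPDFReal m v) := by
  rw [gaussianPDFReal_def]
  fun_prop

lemma hasDerivAt_stdNormalCDF (x : ℝ) :
    HasDerivAt stdNormalCDF (gaussianPDFReal 0 1 x) x := by
  have hint : ∀ y : ℝ, IntegrableOn (gaussianPDFReal 0 1) (Set.Iic y) :=
    fun y => (integrable_gaussianPDFReal 0 1).integrableOn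
  have heq : stdNormalCDF = fun y => stdNormalCDF 0 + ∫ t in (0:ℝ)..y, gaussianPDFReal 0 1 t := by
    funext y
    rw [stdNormalCDF_eq_integral, stdNormalCDF_eq_integral,
      ← intervalIntegral.integral_Iic_sub_Iic (hint 0) (hint y)]
    ring
  rw [heq]
  exact (intervalIntegral.integral_hasDerivAt_right
    ((integrable_gaussianPDFReal 0 1).intervalIntegrable)
    ((continuous_gaussianPDFReal 0 1).stronglyMeasurable.stronglyMeasurableAtFilter)
    (continuous_gaussianPDFReal 0 1).continuousAt).const_add _

lemma gaussPDF_cancel (ν ε : ℝ) (hν : ν ≠ 0) :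
    Real.exp ε * gaussianPDFReal 0 1 (-ε / ν - ν / 2) = gaussianPDFReal 0 1 (-ε / ν + ν / 2) := by
  simp only [gaussianPDFReal, NNReal.coe_one, mul_one, sub_zero]
  rw [mul_left_comm, ← Real.exp_add]
  congr 2
  field_simp
  ring

lemma gdpCurve_mono {ν μ : ℝ} (hν : 0 < ν) (hνμ : ν ≤ μ) (ε : ℝ) :
    gdpCurve ν ε ≤ gdpCurve μ ε := by
  have hμ : 0 < μ := lt_of_lt_of_le hν hνμ
  have hderiv : ∀ m : ℝ, m ∈ Set.Ioi (0:ℝ) →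
      HasDerivAt (fun m => gdpCurve m ε) (gaussianPDFReal 0 1 (-ε / m + m / 2)) m := by
    intro m hm
    have hm0 : m ≠ 0 := ne_of_gt hm
    have h1 : HasDerivAt (fun m : ℝ => -ε / m + m / 2) (ε / m ^ 2 + 1 / 2) m := by
      have h := ((hasDerivAt_inv hm0).const_mul (-ε)).add ((hasDerivAt_id m).div_const 2)
      have hf : (fun m : ℝ => -ε / m + m / 2) = fun m : ℝ => -ε * m⁻¹ + m / 2 := by
        funext y; ring
      rw [hf]
      refine h.congr_deriv ?_
      ring
    have h2 : HasDerivAt (fun m : ℝ => -ε / m - m / 2) (ε / m ^ 2 - 1 / 2) m := by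
      have h := ((hasDerivAt_inv hm0).const_mul (-ε)).sub ((hasDerivAt_id m).div_const 2)
      have hf : (fun m : ℝ => -ε / m - m / 2) = fun m : ℝ => -ε * m⁻¹ - m / 2 := by
        funext y; ring
      rw [hf]
      refine h.congr_deriv ?_
      ring
    have d1 := (hasDerivAt_stdNormalCDF (-ε / m + m / 2)).comp m h1
    have d2 := ((hasDerivAt_stdNormalCDF (-ε / m - m / 2)).comp m h2).const_mul (Real.exp ε)
    have hd := d1.sub d2
    simp only [Function.comp_def] at hd
    rw [← mul_assoc, gaussPDF_cancel m ε hm0, ← mul_sub] at hd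
    refine hd.congr_deriv ?_
    ring
  have cont : ContinuousOn (fun m => gdpCurve m ε) (Set.Ioi 0) :=
    fun m hm => (hderiv m hm).continuousAt.continuousWithinAt
  have smono := strictMonoOn_of_deriv_pos (convex_Ioi 0) cont (fun x hx => by
    rw [interior_Ioi] at hx
    rw [(hderiv x hx).deriv]
    exact gaussianPDFReal_pos _ _ _ one_ne_zero)
  exact smono.monotoneOn (Set.mem_Ioi.2 hν) (Set.mem_Ioi.2 hμ) hνμ

lemma pdf_ratio (c ε x : ℝ) (hc : 0 < c) :
    Real.exp ε * gaussianPDFReal c 1 x ≤ gaussianPDFReal 0 1 x ↔ x ≤ -ε / c + c / 2 := by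
  have hK : (0:ℝ) < (Real.sqrt (2 * Real.pi * (1:NNReal)))⁻¹ := by
    simp only [NNReal.coe_one, mul_one]
    positivity
  simp only [gaussianPDFReal, NNReal.coe_one, mul_one, sub_zero]
  rw [mul_left_comm, mul_le_mul_iff_right₀ (by simpa using hK), ← Real.exp_add, Real.exp_le_exp,
    show -ε / c + c / 2 = (-ε + c ^ 2 / 2) / c by field_simp, le_div_iff₀ hc]
  constructor <;> intro h <;> nlinarith

lemma pdf_le (c ε x : ℝ) (hc : 0 < c) (hx : x ≤ -ε / c + c / 2) :
    ENNReal.ofReal (Real.exp ε) * gaussianPDF c 1 x ≤ gaussianPDF 0 1 x := by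
  rw [gaussianPDF, gaussianPDF, ← ENNReal.ofReal_mul (Real.exp_nonneg _)]
  exact ENNReal.ofReal_le_ofReal ((pdf_ratio c ε x hc).2 hx)

lemma pdf_ge (c ε x : ℝ) (hc : 0 < c) (hx : ¬ x ≤ -ε / c + c / 2) :
    gaussianPDF 0 1 x ≤ ENNReal.ofReal (Real.exp ε) * gaussianPDF c 1 x := by
  rw [gaussianPDF, gaussianPDF, ← ENNReal.ofReal_mul (Real.exp_nonneg _)]
  exact ENNReal.ofReal_le_ofReal (le_of_lt (not_le.1 (fun h => hx ((pdf_ratio c ε x hc).1 h))))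

lemma core (c ε : ℝ) (hc : 0 < c) (hε : 0 ≤ ε) (S : Set ℝ) (hS : MeasurableSet S) :
    gaussianReal 0 1 S ≤
      ENNReal.ofReal (Real.exp ε) * gaussianReal c 1 S + ENNReal.ofReal (gdpCurve c ε) := by
  set t : ℝ := -ε / c + c / 2 with ht
  set E : Set ℝ := Set.Iic t with hE
  set e : ℝ≥0∞ := ENNReal.ofReal (Real.exp ε) with he
  set p : ℝ → ℝ≥0∞ := gaussianPDF 0 1 with hp
  set q : ℝ → ℝ≥0∞ := gaussianPDF c 1 with hq
  have hmp : Measurable p := measurable_gaussianPDF 0 1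
  have hmq : Measurable q := measurable_gaussianPDF c 1
  have hmeq : Measurable (fun x => e * q x) := hmq.const_mul e
  have hP : ∀ (A : Set ℝ), gaussianReal 0 1 A = ∫⁻ x in A, p x := fun A =>
    gaussianReal_apply 0 one_ne_zero A
  have hQ : ∀ (A : Set ℝ), gaussianReal c 1 A = ∫⁻ x in A, q x := fun A =>
    gaussianReal_apply c one_ne_zero A
  -- bound on S \ E
  have h2 : gaussianReal 0 1 (S \ E) ≤ e * gaussianReal c 1 (S \ E) := by
    rw [hP, hQ, ← lintegral_const_mul e hmq]
    refine setLIntegral_mono hmeq (fun x hx => pdf_ge c ε x hc ?_)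
    exact fun h => hx.2 h
  -- bound on S ∩ E
  have hQEfin : ∫⁻ x in E, e * q x ≠ ⊤ := by
    rw [lintegral_const_mul e hmq, ← hQ]
    exact ENNReal.mul_ne_top ENNReal.ofReal_ne_top (measure_ne_top _ _)
  have hle : ∀ x ∈ E, e * q x ≤ p x := fun x hx => pdf_le c ε x hc hx
  have hDE : gaussianReal 0 1 E - e * gaussianReal c 1 E = ENNReal.ofReal (gdpCurve c ε) := by
    have htc : t - c = -ε / c - c / 2 := by rw [ht]; ring
    rw [hE, gaussian_iic 0 t, gaussian_iic c t, sub_zero, htc, he,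
      ← ENNReal.ofReal_mul (Real.exp_nonneg _),
      ← ENNReal.ofReal_sub _ (mul_nonneg (Real.exp_nonneg _) (stdNormalCDF_nonneg _))]
    rfl
  have h1 : gaussianReal 0 1 (S ∩ E) ≤
      e * gaussianReal c 1 (S ∩ E) + (gaussianReal 0 1 E - e * gaussianReal c 1 E) := by
    have step1 : gaussianReal 0 1 (S ∩ E) ≤
        (∫⁻ x in S ∩ E, p x - e * q x) + ∫⁻ x in S ∩ E, e * q x := by
      rw [hP, ← lintegral_add_right' _ hmeq.aemeasurable]
      exact lintegral_mono fun x => le_tsub_add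
    have step2 : ∫⁻ x in S ∩ E, p x - e * q x ≤ ∫⁻ x in E, p x - e * q x :=
      lintegral_mono_set Set.inter_subset_right
    have step3 : ∫⁻ x in E, p x - e * q x = gaussianReal 0 1 E - e * gaussianReal c 1 E := by
      rw [lintegral_sub hmeq hQEfin ((ae_restrict_iff' measurableSet_Iic).2 (ae_of_all _ hle)),
        lintegral_const_mul e hmq, ← hP E, ← hQ E]
    have h4 : ∫⁻ x in S ∩ E, e * q x = e * gaussianReal c 1 (S ∩ E) := by
      rw [lintegral_const_mul e hmq, ← hQ]
    refine le_trans step1 ?_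
    rw [h4, ← step3, add_comm]
    exact add_le_add_right step2 _
  calc gaussianReal 0 1 S
      = gaussianReal 0 1 (S ∩ E) + gaussianReal 0 1 (S \ E) :=
        (measure_inter_add_diff S measurableSet_Iic).symm
    _ ≤ (e * gaussianReal c 1 (S ∩ E) + (gaussianReal 0 1 E - e * gaussianReal c 1 E))
        + e * gaussianReal c 1 (S \ E) := add_le_add h1 h2
    _ = e * (gaussianReal c 1 (S ∩ E) + gaussianReal c 1 (S \ E))
        + (gaussianReal 0 1 E - e * gaussianReal c 1 E) := by ring
    _ = e * gaussianReal c 1 S + ENNReal.ofReal (gdpCurve c ε) := by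
        rw [measure_inter_add_diff S measurableSet_Iic, hDE]

lemma gaussianReal_map_neg (m : ℝ) :
    (gaussianReal m 1).map (fun x : ℝ => -x) = gaussianReal (-m) 1 := by
  have h := gaussianReal_map_const_mul (μ := m) (v := 1) (-1)
  have hv : NNReal.mk ((-1:ℝ) ^ 2) (sq_nonneg _) * 1 = 1 := by
    rw [mul_one]; exact Subtype.ext (by norm_num)
  have hf : (fun x : ℝ => -1 * x) = fun x : ℝ => -x := by funext x; ring
  rw [hv, hf, neg_one_mul] at h
  exact h

lemma unit (μ ε c : ℝ) (hμ : 0 < μ) (hε : 0 ≤ ε) (hc : |c| ≤ μ) (S : Set ℝ)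
    (hS : MeasurableSet S) :
    gaussianReal 0 1 S ≤
      ENNReal.ofReal (Real.exp ε) * gaussianReal c 1 S + ENNReal.ofReal (gdpCurve μ ε) := by
  have pos : ∀ c' : ℝ, 0 < c' → c' ≤ μ → ∀ T : Set ℝ, MeasurableSet T →
      gaussianReal 0 1 T ≤
        ENNReal.ofReal (Real.exp ε) * gaussianReal c' 1 T + ENNReal.ofReal (gdpCurve μ ε) :=
    fun c' hc' hc'μ T hT => le_trans (core c' ε hc' hε T hT)
      (add_le_add_right (ENNReal.ofReal_le_ofReal (gdpCurve_mono hc' hc'μ ε)) _)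
  rcases lt_trichotomy c 0 with h | h | h
  · set T : Set ℝ := (fun x : ℝ => -x) ⁻¹' S with hT
    have hTm : MeasurableSet T := measurable_neg hS
    have e0 : gaussianReal 0 1 S = gaussianReal 0 1 T := by
      conv_lhs => rw [show (0:ℝ) = -0 by ring, ← gaussianReal_map_neg 0]
      rw [Measure.map_apply measurable_neg hS]
    have ec : gaussianReal c 1 S = gaussianReal (-c) 1 T := by
      conv_lhs => rw [show c = -(-c) by ring, ← gaussianReal_map_neg (-c)]
      rw [Measure.map_apply measurable_neg hS]
    rw [e0, ec]
    exact pos (-c) (by linarith) (le_trans (neg_le_abs c) hc) T hTm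
  · subst h
    have h1 : (1:ℝ≥0∞) ≤ ENNReal.ofReal (Real.exp ε) := by
      rw [← ENNReal.ofReal_one]
      exact ENNReal.ofReal_le_ofReal (Real.one_le_exp hε)
    calc gaussianReal 0 1 S = 1 * gaussianReal 0 1 S := (one_mul _).symm
      _ ≤ ENNReal.ofReal (Real.exp ε) * gaussianReal 0 1 S := mul_le_mul_left h1 _
      _ ≤ _ := le_self_add
  · exact pos c h (le_trans (le_abs_self c) hc) S hS

/-- The Gaussian mechanism with noise scale σ = Δ/μ is μ-GDP. -/
theorem gaussian_mechanism_gdp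
    (Δ μ : ℝ) (hΔ : 0 < Δ) (hμ : 0 < μ) (σ : ℝ) (hσ : σ = Δ / μ)
    (a b : ℝ) (hab : |a - b| ≤ Δ)
    (ε : ℝ) (hε : 0 ≤ ε)
    (S : Set ℝ) (hS : MeasurableSet S) :
    gaussianReal a ⟨σ ^ 2, sq_nonneg σ⟩ S ≤
      ENNReal.ofReal (Real.exp ε) * gaussianReal b ⟨σ ^ 2, sq_nonneg σ⟩ S +
        ENNReal.ofReal (gdpCurve μ ε) := by
  have hσpos : 0 < σ := hσ ▸ div_pos hΔ hμ
  set f : ℝ → ℝ := fun x => σ * x + a with hf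
  have hfm : Measurable f := (measurable_id.const_mul σ).add_const a
  have haffine : ∀ m : ℝ, (gaussianReal m 1).map f = gaussianReal (σ * m + a)
      ⟨σ ^ 2, sq_nonneg σ⟩ := by
    intro m
    have hcomp : f = (· + a) ∘ (fun x : ℝ => σ * x) := rfl
    rw [hcomp, ← Measure.map_map (measurable_add_const a) (measurable_const_mul σ),
      gaussianReal_map_const_mul, mul_one, gaussianReal_map_add_const]
    rfl
  set c : ℝ := (b - a) / σ with hc
  have hA : gaussianReal a ⟨σ ^ 2, sq_nonneg σ⟩ S = gaussianReal 0 1 (f ⁻¹' S) := by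
    have := haffine 0
    rw [mul_zero, zero_add] at this
    rw [← this, Measure.map_apply hfm hS]
  have hB : gaussianReal b ⟨σ ^ 2, sq_nonneg σ⟩ S = gaussianReal c 1 (f ⁻¹' S) := by
    have := haffine c
    have hcb : σ * c + a = b := by rw [hc]; field_simp; ring
    rw [hcb] at this
    rw [← this, Measure.map_apply hfm hS]
  have hcle : |c| ≤ μ := by
    rw [hc, abs_div, abs_of_pos hσpos, div_le_iff₀ hσpos]
    calc |b - a| = |a - b| := abs_sub_comm b a
      _ ≤ Δ := hab
      _ = μ * σ := by rw [hσ]; field_simp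
  rw [hA, hB]
  exact unit μ ε c hμ hε hcle _ (hfm hS)
end

section
/- Let (X, 𝒜) and (Y, ℬ) be measurable spaces, let P and Q be probability measures on X, let κ be a Markov kernel from X to Y, let ε ≥ 0 and δ ≥ 0, and suppose P(S) ≤ e^ε · Q(S) + δ for every measurable S ⊆ X. Then the compositions satisfy (P.bind κ)(T) ≤ e^ε · (Q.bind κ)(T) + δ for every measurable T ⊆ Y, where (P.bind κ)(T) = ∫ κ(x)(T) dP(x). (Post-processing immunity of (ε, δ)-differential privacy under randomised post-processing.) -/
open MeasureTheory ProbabilityTheory Set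

/-- Post-processing immunity of (ε, δ)-differential privacy under randomised post-processing:
if P(S) ≤ e^ε Q(S) + δ for all measurable S, then composing with a Markov kernel κ preserves
the inequality. -/
theorem dp_post_processing_randomised
    {X Y : Type*} [MeasurableSpace X] [MeasurableSpace Y]
    (P Q : Measure X) [IsProbabilityMeasure P] [IsProbabilityMeasure Q]
    (κ : Kernel X Y) [IsMarkovKernel κ]
    (ε δ : ℝ) (hε : 0 ≤ ε) (hδ : 0 ≤ δ)
    (h : ∀ S : Set X, MeasurableSet S →
      P S ≤ ENNReal.ofReal (Real.exp ε) * Q S + ENNReal.ofReal δ)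
    (T : Set Y) (hT : MeasurableSet T) :
    (P.bind fun x => κ x) T ≤
      ENNReal.ofReal (Real.exp ε) * (Q.bind fun x => κ x) T + ENNReal.ofReal δ := by
  set f : X → ℝ := fun x => (κ x T).toReal with hf
  have hfm : Measurable f := (κ.measurable_coe hT).ennreal_toReal
  have hf1 : ∀ x, f x ≤ 1 := fun x => by
    simpa [hf] using ENNReal.toReal_le_of_le_ofReal zero_le_one
      (by simpa using prob_le_one (μ := κ x) (s := T))
  have hfnn : ∀ x, 0 ≤ f x := fun x => ENNReal.toReal_nonneg
  have hofr : ∀ x, ENNReal.ofReal (f x) = κ x T := fun x =>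
    ENNReal.ofReal_toReal (measure_ne_top _ _)
  have hbind : ∀ μ : Measure X, (μ.bind fun x => κ x) T = ∫⁻ x, ENNReal.ofReal (f x) ∂μ := by
    intro μ
    rw [Measure.bind_apply hT κ.measurable.aemeasurable]
    exact lintegral_congr fun x => (hofr x).symm
  rw [hbind, hbind]
  rw [lintegral_eq_lintegral_meas_lt P (Filter.Eventually.of_forall hfnn) hfm.aemeasurable,
    lintegral_eq_lintegral_meas_lt Q (Filter.Eventually.of_forall hfnn) hfm.aemeasurable]
  have hsplit : ∀ μ : Measure X,
      ∫⁻ t in Ioi (0:ℝ), μ {a | t < f a} = ∫⁻ t in Ioc (0:ℝ) 1, μ {a | t < f a} := by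
    intro μ
    rw [← Ioc_union_Ioi_eq_Ioi (zero_le_one (α := ℝ)),
      lintegral_union measurableSet_Ioi Ioc_disjoint_Ioi_same]
    have hz : ∀ᵐ t ∂(volume.restrict (Ioi (1:ℝ))), μ {a | t < f a} = 0 := by
      rw [ae_restrict_iff' measurableSet_Ioi]
      filter_upwards [] with t ht
      simp only [mem_Ioi] at ht
      have : {a | t < f a} = ∅ := by
        ext a; simp only [mem_setOf_eq, mem_empty_iff_false, iff_false, not_lt]
        exact (hf1 a).trans ht.le
      rw [this]; simp
    rw [lintegral_congr_ae hz, lintegral_zero, add_zero]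
  rw [hsplit P]
  have hmono : ∫⁻ t in Ioc (0:ℝ) 1, P {a | t < f a} ≤
      ∫⁻ t in Ioc (0:ℝ) 1, (ENNReal.ofReal (Real.exp ε) * Q {a | t < f a} + ENNReal.ofReal δ) := by
    refine lintegral_mono fun t => ?_
    exact h _ (measurableSet_lt measurable_const hfm)
  refine hmono.trans ?_
  have hQm : Measurable fun t : ℝ => Q {a | t < f a} := by
    exact measurable_measure_prodMk_left
      (measurableSet_lt measurable_fst (hfm.comp measurable_snd))
  rw [lintegral_add_right _ measurable_const, lintegral_const_mul _ hQm]
  gcongr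
  · exact Ioc_subset_Ioi_self
  · simp [Measure.restrict_apply, Real.volume_Ioc]
end

section
/- Let Δ > 0, 0 < ε ≤ 1, 0 < δ < 1, and set σ = (Δ/ε)·√(2 ln(2/δ)). Then for all a, b ∈ ℝ with |a − b| ≤ Δ and every measurable set S ⊆ ℝ, the Gaussian measures with variance σ² satisfy N(a, σ²)(S) ≤ e^ε · N(b, σ²)(S) + δ. (The classical Gaussian mechanism bound underlying the functional mechanism of Hall et al.: noise multiplier c = (Δ/ε)·√(2 ln(2/δ)) yields (ε, δ)-DP for ε ≤ 1.) -/
open MeasureTheory ProbabilityTheory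

/-- `∫ x in Ioi c, exp (-(r*(x-c))) = 1/r` for `r > 0`. -/
lemma int_exp_shift (r c : ℝ) (hr : 0 < r) :
    ∫ x in Set.Ioi c, Real.exp (-(r * (x - c))) = 1 / r := by
  have hderiv : ∀ x ∈ Set.Ici c, HasDerivAt (fun x => -(1/r) * Real.exp (-(r * (x - c))))
      (Real.exp (-(r * (x - c)))) x := by
    intro x _
    have h1 : HasDerivAt (fun x : ℝ => -(r * (x - c))) (-r) x := by
      have := (((hasDerivAt_id x).sub_const c).const_mul r).neg
      simpa [Pi.neg_def] using this
    have h2 := (h1.exp).const_mul (-(1/r))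
    convert h2 using 1
    · rfl
    · rfl
    · field_simp
  have hint : IntegrableOn (fun x => Real.exp (-(r * (x - c)))) (Set.Ioi c) := by
    have h : IntegrableOn (fun x => Real.exp (r * c) * Real.exp (-(r * x))) (Set.Ioi c) := by
      have := (exp_neg_integrableOn_Ioi c hr).const_mul (Real.exp (r * c))
      simpa [neg_mul, IntegrableOn] using this
    refine h.congr_fun (fun x _ => ?_) measurableSet_Ioi
    dsimp only
    rw [← Real.exp_add]
    congr 1
    ring
  have htend : Filter.Tendsto (fun x => -(1/r) * Real.exp (-(r * (x - c))))
      Filter.atTop (nhds 0) := by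
    have h1 : Filter.Tendsto (fun x : ℝ => -(r * (x - c))) Filter.atTop Filter.atBot := by
      apply Filter.tendsto_neg_atTop_atBot.comp
      apply Filter.Tendsto.const_mul_atTop hr
      simpa [sub_eq_add_neg] using
        Filter.tendsto_atTop_add_const_right Filter.atTop (-c) Filter.tendsto_id
    have h2 := Real.tendsto_exp_atBot.comp h1
    have := h2.const_mul (-(1/r))
    simpa using this
  have := MeasureTheory.integral_Ioi_of_hasDerivAt_of_tendsto' hderiv hint htend
  rw [this]
  simp

set_option maxHeartbeats 2000000 in
/-- Chernoff-style right tail bound for the Gaussian. -/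
lemma gauss_tail_right (a σ T : ℝ) (hσ : 0 < σ) (hT : σ / Real.sqrt (2 * Real.pi) ≤ T) :
    gaussianReal a ⟨σ ^ 2, sq_nonneg σ⟩ (Set.Ioi (a + T))
      ≤ ENNReal.ofReal (Real.exp (-T ^ 2 / (2 * σ ^ 2))) := by
  have hπ : (0:ℝ) < Real.sqrt (2 * Real.pi) := Real.sqrt_pos.2 (by positivity)
  have hT0 : 0 < T := lt_of_lt_of_le (div_pos hσ hπ) hT
  have hσ2 : (0:ℝ) < σ ^ 2 := by positivity
  have hv : (⟨σ ^ 2, sq_nonneg σ⟩ : NNReal) ≠ 0 := by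
    intro h
    have : ((⟨σ ^ 2, sq_nonneg σ⟩ : NNReal) : ℝ) = 0 := by rw [h]; simp
    simp only [NNReal.coe_mk] at this
    exact absurd this hσ2.ne'
  rw [gaussianReal_apply_eq_integral _ hv]
  refine ENNReal.ofReal_le_ofReal ?_
  set r : ℝ := T / σ ^ 2 with hr_def
  have hr : 0 < r := by positivity
  set c : ℝ := a + T with hc_def
  set C : ℝ := (Real.sqrt (2 * Real.pi * σ ^ 2))⁻¹ * Real.exp (-T ^ 2 / (2 * σ ^ 2)) with hC_def
  have hC0 : 0 ≤ C := by positivity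
  have hkey : ∀ x ∈ Set.Ioi c, gaussianPDFReal a ⟨σ ^ 2, sq_nonneg σ⟩ x
      ≤ C * Real.exp (-(r * (x - c))) := by
    intro x hx
    have hx' : c < x := hx
    have hpdf : gaussianPDFReal a ⟨σ ^ 2, sq_nonneg σ⟩ x
        = (Real.sqrt (2 * Real.pi * σ ^ 2))⁻¹ * Real.exp (-(x - a) ^ 2 / (2 * σ ^ 2)) := by
      unfold gaussianPDFReal
      rfl
    have hEE : Real.exp (-(x - a) ^ 2 / (2 * σ ^ 2))
        ≤ Real.exp (-T ^ 2 / (2 * σ ^ 2)) * Real.exp (-(r * (x - c))) := by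
      rw [← Real.exp_add]
      refine Real.exp_le_exp.2 ?_
      have heq : -T ^ 2 / (2 * σ ^ 2) + -(r * (x - c))
          = (-T ^ 2 - 2 * T * (x - a - T)) / (2 * σ ^ 2) := by
        rw [hr_def, hc_def]
        field_simp
        ring
      rw [heq, div_le_div_iff₀ (by positivity) (by positivity)]
      nlinarith [sq_nonneg (x - a - T), hσ2]
    rw [hpdf, hC_def, mul_assoc ((Real.sqrt (2 * Real.pi * σ ^ 2))⁻¹)]
    refine mul_le_mul_of_nonneg_left hEE ?_
    positivity
  have hfint : IntegrableOn (gaussianPDFReal a ⟨σ ^ 2, sq_nonneg σ⟩) (Set.Ioi c) :=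
    (integrable_gaussianPDFReal a _).integrableOn
  have hint2 : IntegrableOn (fun x => Real.exp (-(r * (x - c)))) (Set.Ioi c) := by
    have h : IntegrableOn (fun x => Real.exp (r * c) * Real.exp (-(r * x))) (Set.Ioi c) := by
      have := (exp_neg_integrableOn_Ioi c hr).const_mul (Real.exp (r * c))
      simpa [neg_mul, IntegrableOn] using this
    refine h.congr_fun (fun x _ => ?_) measurableSet_Ioi
    dsimp only
    rw [← Real.exp_add]
    congr 1
    ring
  have hgint : IntegrableOn (fun x => C * Real.exp (-(r * (x - c)))) (Set.Ioi c) :=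
    hint2.const_mul C
  calc ∫ x in Set.Ioi c, gaussianPDFReal a ⟨σ ^ 2, sq_nonneg σ⟩ x
      ≤ ∫ x in Set.Ioi c, C * Real.exp (-(r * (x - c))) :=
        setIntegral_mono_on hfint hgint measurableSet_Ioi hkey
    _ = C * (1 / r) := by rw [MeasureTheory.integral_const_mul, int_exp_shift r c hr]
    _ ≤ Real.exp (-T ^ 2 / (2 * σ ^ 2)) := by
        have hsq : Real.sqrt (2 * Real.pi * σ ^ 2) = Real.sqrt (2 * Real.pi) * σ := by
          rw [Real.sqrt_mul (by positivity), Real.sqrt_sq hσ.le]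
        have hCr : C * (1 / r) = Real.exp (-T ^ 2 / (2 * σ ^ 2))
            * (σ / (Real.sqrt (2 * Real.pi) * T)) := by
          rw [hC_def, hsq, hr_def]
          field_simp
        rw [hCr]
        refine mul_le_of_le_one_right (Real.exp_nonneg _) ?_
        rw [div_le_one (by positivity)]
        have := (div_le_iff₀ hπ).1 hT
        nlinarith [this]

set_option maxHeartbeats 2000000 in
/-- Left tail bound via the reflection `x ↦ -x`. -/
lemma gauss_tail_left (a σ T : ℝ) (hσ : 0 < σ) (hT : σ / Real.sqrt (2 * Real.pi) ≤ T) :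
    gaussianReal a ⟨σ ^ 2, sq_nonneg σ⟩ (Set.Iio (a - T))
      ≤ ENNReal.ofReal (Real.exp (-T ^ 2 / (2 * σ ^ 2))) := by
  have hmap := gaussianReal_map_const_mul (μ := -a) (v := ⟨σ ^ 2, sq_nonneg σ⟩) (-1)
  have hv1 : (⟨((-1):ℝ) ^ 2, sq_nonneg _⟩ * (⟨σ ^ 2, sq_nonneg σ⟩ : NNReal))
      = (⟨σ ^ 2, sq_nonneg σ⟩ : NNReal) := by
    ext
    push_cast
    norm_num
  erw [hv1] at hmap
  norm_num at hmap
  have hpre : ((fun x : ℝ => -x) ⁻¹' Set.Iio (a - T)) = Set.Ioi (-a + T) := by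
    ext x
    simp only [Set.mem_preimage, Set.mem_Iio, Set.mem_Ioi]
    constructor <;> intro h <;> linarith
  have hmeas : Measurable (fun x : ℝ => -x) := by fun_prop
  calc gaussianReal a ⟨σ ^ 2, sq_nonneg σ⟩ (Set.Iio (a - T))
      = (gaussianReal (-a) ⟨σ ^ 2, sq_nonneg σ⟩).map (fun x => -x) (Set.Iio (a - T)) := by
        rw [hmap]
    _ = gaussianReal (-a) ⟨σ ^ 2, sq_nonneg σ⟩ (Set.Ioi (-a + T)) := by
        rw [Measure.map_apply hmeas measurableSet_Iio, hpre]
    _ ≤ ENNReal.ofReal (Real.exp (-T ^ 2 / (2 * σ ^ 2))) := gauss_tail_right (-a) σ T hσ hT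

set_option maxHeartbeats 2000000 in
/-- The classical Gaussian mechanism bound of Hall et al.: for ε ≤ 1, noise scale
σ = (Δ/ε)√(2 ln(2/δ)) yields (ε, δ)-DP. -/
theorem classical_gaussian_mechanism
    (Δ ε δ : ℝ) (hΔ : 0 < Δ) (hε0 : 0 < ε) (hε1 : ε ≤ 1) (hδ0 : 0 < δ) (hδ1 : δ < 1)
    (σ : ℝ) (hσ : σ = Δ / ε * Real.sqrt (2 * Real.log (2 / δ)))
    (a b : ℝ) (hab : |a - b| ≤ Δ)
    (S : Set ℝ) (hS : MeasurableSet S) :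
    gaussianReal a ⟨σ ^ 2, sq_nonneg σ⟩ S ≤
      ENNReal.ofReal (Real.exp ε) * gaussianReal b ⟨σ ^ 2, sq_nonneg σ⟩ S +
        ENNReal.ofReal δ := by
  -- basic quantities
  have hq : (0:ℝ) ≤ -Real.log δ := le_of_lt (neg_pos.2 (Real.log_neg hδ0 hδ1))
  have hlog2 : (0.6931:ℝ) < Real.log 2 := by
    have := Real.log_two_gt_d9
    linarith
  have hLsplit : Real.log (2 / δ) = Real.log 2 + -Real.log δ := by
    rw [Real.log_div two_ne_zero hδ0.ne']
    ring
  have hL0 : 0 < Real.log (2 / δ) := by rw [hLsplit]; linarith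
  obtain ⟨u, hu_def⟩ : ∃ u : ℝ, u = Real.sqrt (2 * Real.log (2 / δ)) := ⟨_, rfl⟩
  have hu0 : 0 < u := hu_def ▸ Real.sqrt_pos.2 (by linarith)
  have hu2 : u ^ 2 = 2 * Real.log (2 / δ) := by rw [hu_def]; exact Real.sq_sqrt (by linarith)
  have hu2' : u ^ 2 = 2 * Real.log 2 + 2 * (-Real.log δ) := by rw [hu2, hLsplit]; ring
  have hu117 : (1.17:ℝ) ≤ u := by nlinarith [hu2', hq, hu0]
  have hσ_eq : σ = Δ / ε * u := by rw [hσ, hu_def]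
  have hσ0 : 0 < σ := by rw [hσ_eq]; positivity
  have hσ2pos : (0:ℝ) < σ ^ 2 := by positivity
  have hσ2 : σ ^ 2 = Δ ^ 2 * u ^ 2 / ε ^ 2 := by rw [hσ_eq]; field_simp
  obtain ⟨T, hT_def⟩ : ∃ T : ℝ, T = σ ^ 2 * ε / Δ - Δ / 2 := ⟨_, rfl⟩
  have hT_eq : T = Δ * (2 * u ^ 2 - ε) / (2 * ε) := by
    rw [hT_def, hσ2]
    field_simp
  have h2u2ε : (0:ℝ) ≤ 2 * u ^ 2 - ε := by nlinarith [hu117]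
  -- the √(2π) bound
  obtain ⟨w, hw_def⟩ : ∃ w : ℝ, w = Real.sqrt (2 * Real.pi) := ⟨_, rfl⟩
  have hw0 : 0 < w := hw_def ▸ Real.sqrt_pos.2 (by positivity)
  have hw2 : w ^ 2 = 2 * Real.pi := by rw [hw_def]; exact Real.sq_sqrt (by positivity)
  have hw24 : (2.4:ℝ) ≤ w := by nlinarith [hw2, Real.pi_gt_three, hw0]
  have hkeyA : 2 * u ≤ (2 * u ^ 2 - ε) * w := by
    nlinarith [mul_nonneg (sub_nonneg.2 hw24) h2u2ε, sq_nonneg (u - 1.17), hu117, hε1, hε0]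
  have hA : σ / w ≤ T := by
    have hdiff : T - σ / w = Δ * ((2 * u ^ 2 - ε) * w - 2 * u) / (2 * ε * w) := by
      rw [hT_eq, hσ_eq]
      field_simp
    have : 0 ≤ T - σ / w := by
      rw [hdiff]
      apply div_nonneg _ (by positivity)
      exact mul_nonneg hΔ.le (by linarith)
    linarith
  have hA' : σ / Real.sqrt (2 * Real.pi) ≤ T := by rw [← hw_def]; exact hA
  -- the exp(-T²/(2σ²)) ≤ δ bound
  have hkeyB : 8 * (-Real.log δ) * u ^ 2 ≤ (2 * u ^ 2 - ε) ^ 2 := by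
    nlinarith [hu2', hq, hlog2, hε1, hε0, sq_nonneg ε,
      mul_nonneg hq (by linarith : (0:ℝ) ≤ 2 * Real.log 2 - ε)]
  have hTσ : T ^ 2 / (2 * σ ^ 2) = (2 * u ^ 2 - ε) ^ 2 / (8 * u ^ 2) := by
    rw [hT_eq, hσ2]
    field_simp
    ring
  have hB : Real.exp (-T ^ 2 / (2 * σ ^ 2)) ≤ δ := by
    rw [← Real.exp_log hδ0]
    refine Real.exp_le_exp.2 ?_
    rw [neg_div]
    rw [neg_le]
    rw [hTσ, le_div_iff₀ (by positivity)]
    calc -Real.log δ * (8 * u ^ 2) = 8 * (-Real.log δ) * u ^ 2 := by ring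
      _ ≤ (2 * u ^ 2 - ε) ^ 2 := hkeyB
  -- the bad set
  have hv : (⟨σ ^ 2, sq_nonneg σ⟩ : NNReal) ≠ 0 := by
    intro h
    have : ((⟨σ ^ 2, sq_nonneg σ⟩ : NNReal) : ℝ) = 0 := by rw [h]; simp
    simp only [NNReal.coe_mk] at this
    exact absurd this hσ2pos.ne'
  set v : NNReal := ⟨σ ^ 2, sq_nonneg σ⟩ with hv_def
  set B : Set ℝ := {x | 2 * σ ^ 2 * ε < (a - b) * (2 * x - a - b)} with hB_def
  have hBmeas : MeasurableSet B :=
    measurableSet_lt measurable_const (by fun_prop)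
  -- density comparison off B
  have hstep2 : gaussianReal a v (S \ B)
      ≤ ENNReal.ofReal (Real.exp ε) * gaussianReal b v (S \ B) := by
    rw [gaussianReal_apply _ hv, gaussianReal_apply _ hv,
      ← lintegral_const_mul _ (measurable_gaussianPDF b v)]
    refine setLIntegral_mono ((measurable_gaussianPDF b v).const_mul _) ?_
    intro x hx
    have hxB : ¬ (2 * σ ^ 2 * ε < (a - b) * (2 * x - a - b)) := hx.2
    push_neg at hxB
    rw [gaussianPDF, gaussianPDF, ← ENNReal.ofReal_mul (Real.exp_nonneg ε)]
    refine ENNReal.ofReal_le_ofReal ?_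
    have hpdfa : gaussianPDFReal a v x
        = (Real.sqrt (2 * Real.pi * σ ^ 2))⁻¹ * Real.exp (-(x - a) ^ 2 / (2 * σ ^ 2)) := by
      rw [hv_def]
      unfold gaussianPDFReal
      rfl
    have hpdfb : gaussianPDFReal b v x
        = (Real.sqrt (2 * Real.pi * σ ^ 2))⁻¹ * Real.exp (-(x - b) ^ 2 / (2 * σ ^ 2)) := by
      rw [hv_def]
      unfold gaussianPDFReal
      rfl
    have hEE : Real.exp (-(x - a) ^ 2 / (2 * σ ^ 2))
        ≤ Real.exp ε * Real.exp (-(x - b) ^ 2 / (2 * σ ^ 2)) := by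
      rw [← Real.exp_add]
      refine Real.exp_le_exp.2 ?_
      have heq : ε + -(x - b) ^ 2 / (2 * σ ^ 2)
          = (2 * σ ^ 2 * ε + -(x - b) ^ 2) / (2 * σ ^ 2) := by
        field_simp
      rw [heq, div_le_div_iff₀ (by positivity) (by positivity)]
      nlinarith [hxB, hσ2pos]
    rw [hpdfa, hpdfb, mul_left_comm]
    exact mul_le_mul_of_nonneg_left hEE (by positivity)
  -- bad set bound
  have hstep3 : gaussianReal a v B ≤ ENNReal.ofReal δ := by
    rcases lt_trichotomy (a - b) 0 with hs | hs | hs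
    · -- a - b < 0 : B ⊆ Iio (a - T)
      have hsub : B ⊆ Set.Iio (a - T) := by
        intro x hx
        have hx' : 2 * σ ^ 2 * ε < (a - b) * (2 * x - a - b) := hx
        have hsΔ : -(a - b) ≤ Δ := le_trans (neg_le_abs _) hab
        simp only [Set.mem_Iio]
        have h1 : 2 * (-(a - b)) * (a - x) > 2 * σ ^ 2 * ε - (-(a - b)) ^ 2 := by nlinarith [hx']
        rw [hT_def]
        have hgoal : σ ^ 2 * ε / Δ < a - x + Δ / 2 := by
          rw [div_lt_iff₀ hΔ]
          nlinarith [h1, mul_pos (neg_pos.2 hs) hΔ,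
            mul_nonneg (by positivity : (0:ℝ) ≤ 2 * σ ^ 2 * ε)
              (sub_nonneg.2 hsΔ),
            mul_nonneg (mul_nonneg (neg_pos.2 hs).le hΔ.le) (sub_nonneg.2 hsΔ)]
        linarith
      calc gaussianReal a v B ≤ gaussianReal a v (Set.Iio (a - T)) := measure_mono hsub
        _ ≤ ENNReal.ofReal (Real.exp (-T ^ 2 / (2 * σ ^ 2))) := gauss_tail_left a σ T hσ0 hA'
        _ ≤ ENNReal.ofReal δ := ENNReal.ofReal_le_ofReal hB
    · -- a = b : B is empty
      have : B = ∅ := by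
        ext x
        simp only [hB_def, Set.mem_setOf_eq, Set.mem_empty_iff_false, iff_false, not_lt, hs,
          zero_mul]
        positivity
      rw [this]
      simp
    · -- 0 < a - b : B ⊆ Ioi (a + T)
      have hsub : B ⊆ Set.Ioi (a + T) := by
        intro x hx
        have hx' : 2 * σ ^ 2 * ε < (a - b) * (2 * x - a - b) := hx
        have hsΔ : a - b ≤ Δ := le_trans (le_abs_self _) hab
        simp only [Set.mem_Ioi]
        have h1 : 2 * (a - b) * (x - a) > 2 * σ ^ 2 * ε - (a - b) ^ 2 := by nlinarith [hx']
        rw [hT_def]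
        have hgoal : σ ^ 2 * ε / Δ < x - a + Δ / 2 := by
          rw [div_lt_iff₀ hΔ]
          nlinarith [h1, mul_pos hs hΔ,
            mul_nonneg (by positivity : (0:ℝ) ≤ 2 * σ ^ 2 * ε)
              (sub_nonneg.2 hsΔ),
            mul_nonneg (mul_nonneg hs.le hΔ.le) (sub_nonneg.2 hsΔ)]
        linarith
      calc gaussianReal a v B ≤ gaussianReal a v (Set.Ioi (a + T)) := measure_mono hsub
        _ ≤ ENNReal.ofReal (Real.exp (-T ^ 2 / (2 * σ ^ 2))) := gauss_tail_right a σ T hσ0 hA'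
        _ ≤ ENNReal.ofReal δ := ENNReal.ofReal_le_ofReal hB
  -- combine
  calc gaussianReal a v S ≤ gaussianReal a v ((S \ B) ∪ B) := by
        refine measure_mono ?_
        intro x hx
        by_cases hxB : x ∈ B
        · exact Or.inr hxB
        · exact Or.inl ⟨hx, hxB⟩
    _ ≤ gaussianReal a v (S \ B) + gaussianReal a v B := measure_union_le _ _
    _ ≤ ENNReal.ofReal (Real.exp ε) * gaussianReal b v (S \ B) + ENNReal.ofReal δ :=
        add_le_add hstep2 hstep3
    _ ≤ ENNReal.ofReal (Real.exp ε) * gaussianReal b v S + ENNReal.ofReal δ :=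
        add_le_add_left (mul_le_mul_right (measure_mono Set.diff_subset) _) _
end

section
/- Let d ≥ 1, Δ > 0, 0 < ε ≤ 1, 0 < δ < 1, and set σ = (Δ/ε)·√(2 ln(2/δ)). For v ∈ ℝ^d let P_v denote the product measure on ℝ^d whose i-th coordinate is Gaussian with mean v_i and variance σ². Then for all v, w ∈ ℝ^d with ‖v − w‖₂ ≤ Δ and every measurable S ⊆ ℝ^d, P_v(S) ≤ e^ε · P_w(S) + δ. (The multivariate classical Gaussian mechanism bound used in the original functional mechanism analysis.) -/
open MeasureTheory ProbabilityTheory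
open scoped ENNReal NNReal

private lemma gauss_lintegral_pi_prod : ∀ {n : ℕ} (μ : Fin n → Measure ℝ),
    (∀ i, SigmaFinite (μ i)) →
    ∀ (f : Fin n → ℝ → ℝ≥0∞), (∀ i, Measurable (f i)) →
    ∫⁻ x, ∏ i, f i (x i) ∂Measure.pi μ = ∏ i, ∫⁻ t, f i t ∂(μ i) := by
  intro n
  induction n with
  | zero =>
    intro μ _ f _
    rw [Measure.pi_of_empty]
    simp
  | succ n ih =>
    intro μ hsf f hf
    have : ∀ i, SigmaFinite (μ i) := hsf
    have key := (measurePreserving_piFinSuccAbove μ 0).lintegral_comp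
      (f := fun z : ℝ × (Fin n → ℝ) => f 0 z.1 * ∏ j, f (Fin.succ j) (z.2 j))
      (((hf 0).comp measurable_fst).mul
        (Finset.measurable_prod _ fun j _ => (hf _).comp ((measurable_pi_apply j).comp measurable_snd)))
    have lhs_eq : ∫⁻ x, ∏ i, f i (x i) ∂Measure.pi μ
        = ∫⁻ x, f 0 (x 0) * ∏ j, f (Fin.succ j) (x (Fin.succ j)) ∂Measure.pi μ := by
      congr 1; funext x; rw [Fin.prod_univ_succ]
    rw [lhs_eq]
    have ptw : ∀ x : (i : Fin (n+1)) → ℝ,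
        f 0 (x 0) * ∏ j, f (Fin.succ j) (x (Fin.succ j))
        = f 0 ((MeasurableEquiv.piFinSuccAbove (fun _ => ℝ) 0) x).1
          * ∏ j, f (Fin.succ j) (((MeasurableEquiv.piFinSuccAbove (fun _ => ℝ) 0) x).2 j) := by
      intro x
      simp [MeasurableEquiv.piFinSuccAbove, Fin.succAbove_zero, Fin.tail]
    simp_rw [ptw]
    rw [key]
    have h2 : ∫⁻ b : ℝ × (Fin n → ℝ), f 0 b.1 * ∏ j, f (Fin.succ j) (b.2 j)
          ∂(μ 0).prod (Measure.pi fun j => μ (Fin.succAbove 0 j))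
        = (∫⁻ t, f 0 t ∂μ 0) *
          ∫⁻ y, ∏ j, f (Fin.succ j) (y j) ∂Measure.pi (fun j => μ (Fin.succAbove 0 j)) :=
      lintegral_prod_mul (hf 0).aemeasurable
        (Finset.measurable_prod _ fun j _ => (hf _).comp (measurable_pi_apply j)).aemeasurable
    rw [h2, ih _ (fun j => hsf _) _ (fun j => hf _), Fin.prod_univ_succ]
    simp [Fin.succAbove_zero]

private lemma gauss_pi_eq_withDensity {n : ℕ} (m : Fin n → ℝ) (V : ℝ≥0) (hV : V ≠ 0) :
    Measure.pi (fun i => gaussianReal (m i) V)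
      = (Measure.pi (fun _ : Fin n => (volume : Measure ℝ))).withDensity
          (fun x => ∏ i, gaussianPDF (m i) V (x i)) := by
  refine Measure.pi_eq fun s hs => ?_
  rw [withDensity_apply _ (MeasurableSet.univ_pi hs),
    ← lintegral_indicator (MeasurableSet.univ_pi hs)]
  have hind : ∀ x : Fin n → ℝ, (Set.univ.pi s).indicator
        (fun x => ∏ i, gaussianPDF (m i) V (x i)) x
      = ∏ i, (s i).indicator (gaussianPDF (m i) V) (x i) := by
    intro x
    by_cases hx : x ∈ Set.univ.pi s
    · rw [Set.indicator_of_mem hx]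
      exact Finset.prod_congr rfl fun i _ =>
        (Set.indicator_of_mem (hx i (Set.mem_univ i)) _).symm
    · rw [Set.indicator_of_notMem hx]
      obtain ⟨i, hi⟩ := by simpa [Set.mem_pi] using hx
      exact (Finset.prod_eq_zero (Finset.mem_univ i)
        (by rw [Set.indicator_of_notMem hi])).symm
  simp_rw [hind]
  rw [gauss_lintegral_pi_prod _ (fun _ => inferInstance) _
      (fun i => (measurable_gaussianPDF (m i) V).indicator (hs i))]
  refine Finset.prod_congr rfl fun i _ => ?_
  rw [gaussianReal_of_var_ne_zero _ hV, withDensity_apply _ (hs i),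
    lintegral_indicator (hs i)]

private lemma gauss_lintegral_exp (m : ℝ) (V : ℝ≥0) (hV : V ≠ 0) (t : ℝ) :
    ∫⁻ x, ENNReal.ofReal (Real.exp (t * x)) ∂gaussianReal m V
      = ENNReal.ofReal (Real.exp (t * m + t ^ 2 * (V : ℝ) / 2)) := by
  rw [gaussianReal_of_var_ne_zero _ hV,
    lintegral_withDensity_eq_lintegral_mul _ (measurable_gaussianPDF m V)
      (by fun_prop)]
  have hV0 : (0 : ℝ) < (V : ℝ) := by positivity
  have ptw : ∀ x : ℝ, gaussianPDF m V x * ENNReal.ofReal (Real.exp (t * x))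
      = ENNReal.ofReal (Real.exp (t * m + t ^ 2 * (V : ℝ) / 2)) *
        gaussianPDF (m + t * V) V x := by
    intro x
    rw [gaussianPDF, gaussianPDF, ← ENNReal.ofReal_mul (gaussianPDFReal_nonneg _ _ _),
      ← ENNReal.ofReal_mul (Real.exp_nonneg _)]
    congr 1
    have key : Real.exp (- (x - m)^2 / (2 * (V:ℝ))) * Real.exp (t * x)
        = Real.exp (t * m + t ^ 2 * (V:ℝ) / 2) *
          Real.exp (- (x - (m + t * (V:ℝ)))^2 / (2 * (V:ℝ))) := by
      rw [← Real.exp_add, ← Real.exp_add]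
      congr 1
      field_simp
      ring
    simp only [gaussianPDFReal]
    calc (Real.sqrt (2 * Real.pi * (V:ℝ)))⁻¹ * Real.exp (- (x - m)^2 / (2 * (V:ℝ)))
          * Real.exp (t * x)
        = (Real.sqrt (2 * Real.pi * (V:ℝ)))⁻¹ *
            (Real.exp (- (x - m)^2 / (2 * (V:ℝ))) * Real.exp (t * x)) := by ring
      _ = (Real.sqrt (2 * Real.pi * (V:ℝ)))⁻¹ * (Real.exp (t * m + t ^ 2 * (V:ℝ) / 2) *
            Real.exp (- (x - (m + t * (V:ℝ)))^2 / (2 * (V:ℝ)))) := by rw [key]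
      _ = Real.exp (t * m + t ^ 2 * (V:ℝ) / 2) *
            ((Real.sqrt (2 * Real.pi * (V:ℝ)))⁻¹ *
              Real.exp (- (x - (m + t * (V:ℝ)))^2 / (2 * (V:ℝ)))) := by ring
  simp_rw [Pi.mul_apply, ptw]
  rw [lintegral_const_mul _ (measurable_gaussianPDF _ V),
    lintegral_gaussianPDF_eq_one _ hV, mul_one]

private lemma gauss_chernoff_arith {ε a L : ℝ} (hε0 : 0 < ε) (hε1 : ε ≤ 1) (ha : 0 < a)
    (hL : Real.log 2 ≤ L) (haL : a * (4 * L) ≤ ε ^ 2) :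
    4 * a * (L - Real.log 2) ≤ (ε - a) ^ 2 := by
  have hlog2 : (0.6931471803 : ℝ) < Real.log 2 := Real.log_two_gt_d9
  nlinarith [sq_nonneg a, mul_nonneg ha.le (sub_nonneg.2 hε1),
    mul_pos ha (show (0:ℝ) < 4 * Real.log 2 - 2 by nlinarith)]


set_option maxHeartbeats 1000000 in
/-- The multivariate classical Gaussian mechanism bound used in the original functional
mechanism analysis: for ε ≤ 1, noise scale σ = (Δ/ε)√(2 ln(2/δ)) yields (ε, δ)-DP for
isotropic Gaussians on ℝ^d with means at ℓ2-distance at most Δ. -/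
theorem classical_multivariate_gaussian_mechanism
    (d : ℕ) (hd : 1 ≤ d)
    (Δ ε δ : ℝ) (hΔ : 0 < Δ) (hε0 : 0 < ε) (hε1 : ε ≤ 1) (hδ0 : 0 < δ) (hδ1 : δ < 1)
    (σ : ℝ) (hσ : σ = Δ / ε * Real.sqrt (2 * Real.log (2 / δ)))
    (v w : Fin d → ℝ) (hvw : Real.sqrt (∑ i, (v i - w i) ^ 2) ≤ Δ)
    (S : Set (Fin d → ℝ)) (hS : MeasurableSet S) :
    Measure.pi (fun i => gaussianReal (v i) ⟨σ ^ 2, sq_nonneg σ⟩) S ≤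
      ENNReal.ofReal (Real.exp ε) *
        Measure.pi (fun i => gaussianReal (w i) ⟨σ ^ 2, sq_nonneg σ⟩) S +
        ENNReal.ofReal δ := by
  set V : ℝ≥0 := ⟨σ ^ 2, sq_nonneg σ⟩ with hVdef
  -- basic positivity facts
  set L : ℝ := Real.log (2 / δ) with hLdef
  have h2δ : (2 : ℝ) ≤ 2 / δ := by
    rw [le_div_iff₀ hδ0]; nlinarith
  have hl2 : Real.log 2 ≤ L := Real.log_le_log (by norm_num) h2δ
  have hlog2 : (0.6931471803 : ℝ) < Real.log 2 := Real.log_two_gt_d9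
  have hL0 : 0 < L := by linarith
  have hσ0 : 0 < σ := by
    rw [hσ]
    exact mul_pos (div_pos hΔ hε0) (Real.sqrt_pos.2 (by linarith))
  have hσ2 : σ ^ 2 = (Δ / ε) ^ 2 * (2 * L) := by
    rw [hσ, mul_pow, Real.sq_sqrt (by linarith)]
  have hVc : (V : ℝ) = σ ^ 2 := rfl
  have hV : V ≠ 0 := by
    intro h
    rw [h, NNReal.coe_zero] at hVc
    nlinarith
  -- trivial case v = w
  by_cases hvwz : v = w
  · subst hvwz
    refine le_trans (le_mul_of_one_le_left zero_le
      (ENNReal.one_le_ofReal.2 (Real.one_le_exp hε0.le))) le_self_add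
  -- nontrivial case
  set nsq : ℝ := ∑ i, (v i - w i) ^ 2 with hnsqdef
  have hnsq_nonneg : 0 ≤ nsq := Finset.sum_nonneg fun _ _ => sq_nonneg _
  have hnsqΔ : nsq ≤ Δ ^ 2 := by
    nlinarith [Real.sq_sqrt hnsq_nonneg, Real.sqrt_nonneg nsq]
  have hnsq : 0 < nsq := by
    rcases lt_or_eq_of_le hnsq_nonneg with h | h
    · exact h
    · exfalso
      refine hvwz (funext fun i => sub_eq_zero.1 ?_)
      have := (Finset.sum_eq_zero_iff_of_nonneg (fun i _ => sq_nonneg (v i - w i))).1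
        h.symm i (Finset.mem_univ i)
      exact pow_eq_zero_iff two_ne_zero |>.1 this
  set a : ℝ := nsq / (2 * σ ^ 2) with hadef
  have ha : 0 < a := div_pos hnsq (by positivity)
  have haL : a * (4 * L) ≤ ε ^ 2 := by
    have key : a * (4 * L) = nsq * ε ^ 2 / Δ ^ 2 := by
      rw [hadef, hσ2]
      field_simp
      ring
    rw [key, div_le_iff₀ (by positivity)]
    nlinarith [sq_nonneg ε]
  have haε : a ≤ ε := by
    nlinarith [mul_le_mul_of_nonneg_left (show (2:ℝ) ≤ 4 * L by linarith) ha.le]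
  set lam : ℝ := (ε - a) / (2 * a) with hlamdef
  have hlam0 : 0 ≤ lam := div_nonneg (by linarith) (by linarith)
  set b : ℝ := ∑ i, (v i - w i) * (v i + w i) / 2 with hbdef
  set g : (Fin d → ℝ) → ℝ := fun x => ((∑ i, (v i - w i) * x i) - b) / σ ^ 2 with hgdef
  have hb_id : (∑ i, (v i - w i) * v i) - b = nsq / 2 := by
    rw [hbdef, hnsqdef, ← Finset.sum_sub_distrib, Finset.sum_div]
    exact Finset.sum_congr rfl fun i _ => by ring
  have hsum_meas : Measurable fun x : Fin d → ℝ => ∑ i, (v i - w i) * x i :=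
    Finset.measurable_sum _ fun i _ => (measurable_pi_apply i).const_mul _
  have hgmeas : Measurable g := (hsum_meas.sub measurable_const).div_const _
  set A : Set (Fin d → ℝ) := {x | g x ≤ ε} with hAdef
  have hA : MeasurableSet A := measurableSet_le hgmeas measurable_const
  set Fv : (Fin d → ℝ) → ℝ≥0∞ := fun x => ∏ i, gaussianPDF (v i) V (x i) with hFvdef
  set Fw : (Fin d → ℝ) → ℝ≥0∞ := fun x => ∏ i, gaussianPDF (w i) V (x i) with hFwdef
  have hFvm : Measurable Fv :=
    Finset.measurable_prod _ fun i _ => (measurable_gaussianPDF _ _).comp (measurable_pi_apply i)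
  have hFwm : Measurable Fw :=
    Finset.measurable_prod _ fun i _ => (measurable_gaussianPDF _ _).comp (measurable_pi_apply i)
  have hPv := gauss_pi_eq_withDensity v V hV
  have hPw := gauss_pi_eq_withDensity w V hV
  -- pointwise density ratio
  have hratio : ∀ x, Fv x = ENNReal.ofReal (Real.exp (g x)) * Fw x := by
    intro x
    have coord : ∀ i, gaussianPDFReal (v i) V (x i)
        = Real.exp ((v i - w i) * (2 * x i - v i - w i) / (2 * σ ^ 2)) *
          gaussianPDFReal (w i) V (x i) := by
      intro i
      simp only [gaussianPDFReal, hVc]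
      have : Real.exp (- (x i - v i)^2 / (2 * σ ^ 2))
          = Real.exp ((v i - w i) * (2 * x i - v i - w i) / (2 * σ ^ 2)) *
            Real.exp (- (x i - w i)^2 / (2 * σ ^ 2)) := by
        rw [← Real.exp_add]
        congr 1
        field_simp
        ring
      rw [this]; ring
    have hsumc : ∑ i, (v i - w i) * (2 * x i - v i - w i) / (2 * σ ^ 2) = g x := by
      have h1 : ∑ i, (v i - w i) * (2 * x i - v i - w i)
          = 2 * ((∑ i, (v i - w i) * x i) - b) := by
        rw [hbdef, mul_sub, Finset.mul_sum, Finset.mul_sum, ← Finset.sum_sub_distrib]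
        exact Finset.sum_congr rfl fun i _ => by ring
      have hgx : g x = ((∑ i, (v i - w i) * x i) - b) / σ ^ 2 := rfl
      rw [← Finset.sum_div, h1, hgx, mul_div_mul_left _ _ (two_ne_zero (α := ℝ))]
    have hreal : ∏ i, gaussianPDFReal (v i) V (x i)
        = Real.exp (g x) * ∏ i, gaussianPDFReal (w i) V (x i) := by
      calc ∏ i, gaussianPDFReal (v i) V (x i)
          = ∏ i, (Real.exp ((v i - w i) * (2 * x i - v i - w i) / (2 * σ ^ 2)) *
              gaussianPDFReal (w i) V (x i)) := Finset.prod_congr rfl fun i _ => coord i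
        _ = (∏ i, Real.exp ((v i - w i) * (2 * x i - v i - w i) / (2 * σ ^ 2))) *
              ∏ i, gaussianPDFReal (w i) V (x i) := Finset.prod_mul_distrib
        _ = Real.exp (g x) * ∏ i, gaussianPDFReal (w i) V (x i) := by
              rw [← Real.exp_sum, hsumc]
    rw [hFvdef, hFwdef]
    simp only [gaussianPDF]
    rw [← ENNReal.ofReal_prod_of_nonneg (fun i _ => gaussianPDFReal_nonneg _ _ _),
      ← ENNReal.ofReal_prod_of_nonneg (fun i _ => gaussianPDFReal_nonneg _ _ _),
      ← ENNReal.ofReal_mul (Real.exp_nonneg _), hreal]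
  -- claim 1
  have claim1 : Measure.pi (fun i => gaussianReal (v i) V) (S ∩ A)
      ≤ ENNReal.ofReal (Real.exp ε) * Measure.pi (fun i => gaussianReal (w i) V) S := by
    rw [hPv, hPw, withDensity_apply _ (hS.inter hA), withDensity_apply _ hS]
    calc ∫⁻ x in S ∩ A, Fv x ∂Measure.pi (fun _ => volume)
        ≤ ∫⁻ x in S ∩ A, ENNReal.ofReal (Real.exp ε) * Fw x ∂Measure.pi (fun _ => volume) := by
          refine setLIntegral_mono (measurable_const.mul hFwm) fun x hx => ?_
          rw [hratio x]
          exact mul_le_mul_left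
            (ENNReal.ofReal_le_ofReal (Real.exp_le_exp.2 hx.2)) _
      _ = ENNReal.ofReal (Real.exp ε) * ∫⁻ x in S ∩ A, Fw x ∂Measure.pi (fun _ => volume) :=
          lintegral_const_mul _ hFwm
      _ ≤ ENNReal.ofReal (Real.exp ε) * ∫⁻ x in S, Fw x ∂Measure.pi (fun _ => volume) :=
          mul_le_mul_right (lintegral_mono_set Set.inter_subset_left) _
  -- claim 2 : Chernoff bound
  have claim2 : Measure.pi (fun i => gaussianReal (v i) V) Aᶜ ≤ ENNReal.ofReal δ := by
    set t : Fin d → ℝ := fun i => lam * (v i - w i) / σ ^ 2 with htdef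
    set C : ℝ := -(lam * b) / σ ^ 2 - lam * ε with hCdef
    have hexp : ∀ x : Fin d → ℝ, ENNReal.ofReal (Real.exp (lam * (g x - ε)))
        = ENNReal.ofReal (Real.exp C) * ∏ i, ENNReal.ofReal (Real.exp (t i * x i)) := by
      intro x
      rw [← ENNReal.ofReal_prod_of_nonneg (fun i _ => Real.exp_nonneg _),
        ← ENNReal.ofReal_mul (Real.exp_nonneg _), ← Real.exp_sum, ← Real.exp_add]
      congr 1
      have hts : ∑ i, t i * x i = lam * (∑ i, (v i - w i) * x i) / σ ^ 2 := by
        have hterm : ∀ i ∈ Finset.univ, t i * x i = lam * ((v i - w i) * x i) / σ ^ 2 := by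
          intro i _; simp only [htdef]; ring
        rw [Finset.sum_congr rfl hterm, ← Finset.sum_div, ← Finset.mul_sum]
      have hgx : g x = ((∑ i, (v i - w i) * x i) - b) / σ ^ 2 := rfl
      rw [hts, hgx, hCdef]
      field_simp
      ring
    have hbound : Measure.pi (fun i => gaussianReal (v i) V) Aᶜ
        ≤ ∫⁻ x, ENNReal.ofReal (Real.exp (lam * (g x - ε)))
            ∂Measure.pi (fun i => gaussianReal (v i) V) := by
      rw [← setLIntegral_one, ← lintegral_indicator hA.compl]
      refine lintegral_mono fun x => ?_
      by_cases hx : x ∈ Aᶜ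
      · rw [Set.indicator_of_mem hx]
        refine ENNReal.one_le_ofReal.2 (Real.one_le_exp ?_)
        have : ε < g x := lt_of_not_ge hx
        exact mul_nonneg hlam0 (by linarith)
      · rw [Set.indicator_of_notMem hx]
        exact zero_le
    have hcompute : ∫⁻ x, ENNReal.ofReal (Real.exp (lam * (g x - ε)))
          ∂Measure.pi (fun i => gaussianReal (v i) V)
        = ENNReal.ofReal (Real.exp (lam * a - lam * ε + lam ^ 2 * a)) := by
      simp_rw [hexp]
      have hm : Measurable fun x : Fin d → ℝ => ∏ i, ENNReal.ofReal (Real.exp (t i * x i)) :=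
        Finset.measurable_prod _ fun i _ => by fun_prop
      rw [lintegral_const_mul _ hm]
      have hpp := gauss_lintegral_pi_prod (fun i => gaussianReal (v i) V)
        (fun _ => inferInstance) (fun i s => ENNReal.ofReal (Real.exp (t i * s)))
        (fun i => by fun_prop)
      rw [hpp]
      have : ∀ i ∈ Finset.univ, ∫⁻ s, ENNReal.ofReal (Real.exp (t i * s)) ∂gaussianReal (v i) V
          = ENNReal.ofReal (Real.exp (t i * v i + (t i) ^ 2 * σ ^ 2 / 2)) := by
        intro i _
        rw [gauss_lintegral_exp _ _ hV, hVc]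
      rw [Finset.prod_congr rfl this,
        ← ENNReal.ofReal_prod_of_nonneg (fun i _ => Real.exp_nonneg _),
        ← ENNReal.ofReal_mul (Real.exp_nonneg _), ← Real.exp_sum, ← Real.exp_add]
      congr 1
      have hsum1 : ∑ i, (t i * v i + (t i) ^ 2 * σ ^ 2 / 2)
          = lam * (∑ i, (v i - w i) * v i) / σ ^ 2 + lam ^ 2 * nsq / (2 * σ ^ 2) := by
        rw [Finset.sum_add_distrib]
        congr 1
        · have hterm : ∀ i ∈ Finset.univ, t i * v i = lam * ((v i - w i) * v i) / σ ^ 2 := by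
            intro i _; simp only [htdef]; ring
          rw [Finset.sum_congr rfl hterm, ← Finset.sum_div, ← Finset.mul_sum]
        · have hterm : ∀ i ∈ Finset.univ,
              (t i) ^ 2 * σ ^ 2 / 2 = lam ^ 2 * ((v i - w i) ^ 2) / (2 * σ ^ 2) := by
            intro i _; simp only [htdef]; field_simp
          rw [Finset.sum_congr rfl hterm, ← Finset.sum_div, ← Finset.mul_sum, hnsqdef]
      rw [hsum1, hCdef]
      have h2 : lam * (∑ i, (v i - w i) * v i) / σ ^ 2 - lam * b / σ ^ 2 = lam * a := by
        have hsb : (∑ i, (v i - w i) * v i) = b + nsq / 2 := by linarith [hb_id]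
        rw [hsb, hadef]
        field_simp
        ring
      have haa : lam ^ 2 * nsq / (2 * σ ^ 2) = lam ^ 2 * a := by
        rw [hadef]; ring
      rw [haa]
      congr 1
      rw [neg_div]
      linarith [h2]
    have hfinal : Real.exp (lam * a - lam * ε + lam ^ 2 * a) ≤ δ := by
      have hE : lam * a - lam * ε + lam ^ 2 * a = -((ε - a) ^ 2 / (4 * a)) := by
        rw [hlamdef]
        field_simp
        ring
      have harith := gauss_chernoff_arith hε0 hε1 ha hl2 haL
      have hlogδ : Real.log δ = Real.log 2 - L := by
        rw [hLdef, Real.log_div two_ne_zero (ne_of_gt hδ0)]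
        ring
      have : lam * a - lam * ε + lam ^ 2 * a ≤ Real.log δ := by
        rw [hE, hlogδ]
        rw [neg_le, neg_sub]
        rw [le_div_iff₀ (by positivity)]
        nlinarith [harith]
      calc Real.exp (lam * a - lam * ε + lam ^ 2 * a) ≤ Real.exp (Real.log δ) :=
            Real.exp_le_exp.2 this
        _ = δ := Real.exp_log hδ0
    calc Measure.pi (fun i => gaussianReal (v i) V) Aᶜ
        ≤ ∫⁻ x, ENNReal.ofReal (Real.exp (lam * (g x - ε)))
            ∂Measure.pi (fun i => gaussianReal (v i) V) := hbound
      _ = ENNReal.ofReal (Real.exp (lam * a - lam * ε + lam ^ 2 * a)) := hcompute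
      _ ≤ ENNReal.ofReal δ := ENNReal.ofReal_le_ofReal hfinal
  -- conclusion
  calc Measure.pi (fun i => gaussianReal (v i) V) S
      = Measure.pi (fun i => gaussianReal (v i) V) (S ∩ A)
        + Measure.pi (fun i => gaussianReal (v i) V) (S \ A) :=
        (measure_inter_add_diff S hA).symm
    _ ≤ ENNReal.ofReal (Real.exp ε) * Measure.pi (fun i => gaussianReal (w i) V) S
        + ENNReal.ofReal δ := by
        refine add_le_add claim1 (le_trans (measure_mono fun x hx => hx.2) claim2)
end
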